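/- Let ᾱ be a long simple root with [θ:ᾱ] = 1. Then the set {γ ∈ Δ⁺ : [γ:ᾱ] = 1}, which equals {γ ∈ Δ⁺ : ᾱ ≼ γ}, is an abelian upper ideal of (Δ⁺, ≼) that is maximal with respect to inclusion among abelian upper ideals, and S of this ideal equals {ᾱ}. (This ideal is the maximal abelian ideal a(ᾱ)_max; it is the nilradical of the maximal standard parabolic subalgebra determined by ᾱ, which is its normaliser.) -/

import Mathlib

open scoped InnerProductSpace

/-- An irreducible reduced crystallographic root system, spanning a finite-dimensional
real inner product space, together with a fixed base (set of simple roots) and the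
coefficient function expressing each root in the base. -/
structure RootSystemData (V : Type) [NormedAddCommGroup V] [InnerProductSpace ℝ V]
    [FiniteDimensional ℝ V] where
  roots : Set V
  finite : roots.Finite
  nonzero : ∀ γ ∈ roots, γ ≠ 0
  spans : Submodule.span ℝ roots = ⊤
  reflClosed : ∀ α ∈ roots, ∀ β ∈ roots, β - (2 * ⟪β, α⟫_ℝ / ⟪α, α⟫_ℝ) • α ∈ roots
  crystal : ∀ α ∈ roots, ∀ β ∈ roots, ∃ k : ℤ, 2 * ⟪β, α⟫_ℝ / ⟪α, α⟫_ℝ = (k : ℝ)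
  reduced : ∀ α ∈ roots, ∀ t : ℝ, t • α ∈ roots → t = 1 ∨ t = -1
  irred : ∀ A B : Set V, roots = A ∪ B → (∀ a ∈ A, ∀ b ∈ B, ⟪a, b⟫_ℝ = 0) →
    A = ∅ ∨ B = ∅
  simples : Finset V
  simples_sub : ↑simples ⊆ roots
  simples_indep : LinearIndependent ℝ (Subtype.val : {x : V // x ∈ simples} → V)
  coeff : V → V → ℤ
  coeff_spec : ∀ γ ∈ roots, γ = ∑ α ∈ simples, coeff γ α • α
  coeff_sign : ∀ γ ∈ roots, (∀ α ∈ simples, 0 ≤ coeff γ α) ∨ (∀ α ∈ simples, coeff γ α ≤ 0)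

namespace RootSystemData

variable {V : Type} [NormedAddCommGroup V] [InnerProductSpace ℝ V] [FiniteDimensional ℝ V]
variable (R : RootSystemData V)

/-- The set of positive roots `Δ⁺` (w.r.t. the base `simples`). -/
def posRoots : Set V := {γ | γ ∈ R.roots ∧ ∀ α ∈ R.simples, 0 ≤ R.coeff γ α}

/-- The partial order `μ ≼ ν`: `ν - μ` is a nonnegative integral combination of simple roots. -/
def rle (μ ν : V) : Prop := ∃ c : V → ℕ, ν - μ = ∑ α ∈ R.simples, (c α : ℤ) • α

/-- `θ` is the highest root. -/
def IsHighest (θ : V) : Prop := θ ∈ R.posRoots ∧ ∀ γ ∈ R.roots, R.rle γ θ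

/-- `γ` is a long root: a root of maximal length. -/
def IsLong (γ : V) : Prop := γ ∈ R.roots ∧ ∀ γ' ∈ R.roots, ‖γ'‖ ≤ ‖γ‖

/-- `I` is an upper ideal of `(Δ⁺, ≼)`. -/
def IsUpperIdeal (I : Set V) : Prop :=
  I ⊆ R.posRoots ∧ ∀ ν ∈ I, ∀ γ ∈ R.posRoots, R.rle ν γ → γ ∈ I

/-- `I` is an abelian upper ideal of `(Δ⁺, ≼)`. -/
def IsAbelianIdeal (I : Set V) : Prop :=
  R.IsUpperIdeal I ∧ ∀ γ₁ ∈ I, ∀ γ₂ ∈ I, γ₁ + γ₂ ∉ R.roots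

/-- The set of minimal elements of `M ⊆ Δ⁺` w.r.t. `≼`. -/
def minSet (M : Set V) : Set V := {γ | γ ∈ M ∧ ∀ ν ∈ M, R.rle ν γ → ν = γ}

/-- The set of maximal elements of `M ⊆ Δ⁺` w.r.t. `≼`. -/
def maxSet (M : Set V) : Set V := {γ | γ ∈ M ∧ ∀ ν ∈ M, R.rle γ ν → ν = γ}

/-- `S(I) = {α ∈ Π : ∃ γ ∈ min(I), γ - α ∈ Δ⁺ ∪ {0}}`; the complement `Π ∖ S(I)` is the
set of simple roots of the standard Levi subalgebra of the normaliser of the ideal `I`. -/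
def normS (I : Set V) : Set V :=
  {α | α ∈ R.simples ∧ ∃ γ ∈ R.minSet I, (γ - α ∈ R.posRoots ∨ γ = α)}

/-- `H = {γ ∈ Δ⁺ : (γ, θ) ≠ 0}`. -/
def Hset (θ : V) : Set V := {γ | γ ∈ R.posRoots ∧ ⟪γ, θ⟫_ℝ ≠ 0}

/-- `deg_S(γ) = Σ_{α ∈ S} [γ:α]`. -/
def degS (S : Finset V) (γ : V) : ℤ := ∑ α ∈ S, R.coeff γ α

/-- `I_S = {γ ∈ Δ⁺ : deg_S(γ) ≥ ⌊d(S)/2⌋ + 1}`, where `d(S) = deg_S(θ)`: the abelian ideal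
`g(≥ ⌊hot(p)/2⌋ + 1)` associated with the standard parabolic subalgebra `p(S)`. -/
def idealS (S : Finset V) (θ : V) : Set V :=
  {γ | γ ∈ R.posRoots ∧ R.degS S θ / 2 + 1 ≤ R.degS S γ}

/-- The highest root `θ` is fundamental with `α_θ` the unique simple root not
orthogonal to `θ`, and `(θ, α_θ∨) = 1`. -/
def IsFundamental (θ αθ : V) : Prop :=
  αθ ∈ R.simples ∧ ⟪θ, αθ⟫_ℝ ≠ 0 ∧ (∀ β ∈ R.simples, ⟪θ, β⟫_ℝ ≠ 0 → β = αθ) ∧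
    2 * ⟪θ, αθ⟫_ℝ / ⟪αθ, αθ⟫_ℝ = 1

end RootSystemData

/-- The reflection `s_α`. -/
noncomputable def rsRefl {V : Type} [NormedAddCommGroup V] [InnerProductSpace ℝ V] (α x : V) : V :=
  x - (2 * ⟪x, α⟫_ℝ / ⟪α, α⟫_ℝ) • α

/-- The element of the Weyl group given by the word `l = [α₁, …, α_m]`,
namely `s_{α₁} ∘ ⋯ ∘ s_{α_m}`; its inverse is `wordMap l.reverse`. -/
noncomputable def wordMap {V : Type} [NormedAddCommGroup V] [InnerProductSpace ℝ V] (l : List V) : V → V :=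
  l.foldr (fun α f => rsRefl α ∘ f) id


set_option linter.unusedSectionVars false

section AuxLemmas

variable {V : Type} [NormedAddCommGroup V] [InnerProductSpace ℝ V] [FiniteDimensional ℝ V]

lemma aux_inner_self_pos {x : V} (hx : x ≠ 0) : 0 < ⟪x, x⟫_ℝ := by
  rw [real_inner_self_eq_norm_sq]
  have : 0 < ‖x‖ := norm_pos_iff.mpr hx
  positivity

namespace RootSystemData

variable (R : RootSystemData V)

/-- Coefficients w.r.t. the base are unique. -/
lemma coeff_unique {γ : V} (hγ : γ ∈ R.roots) (f : V → ℤ)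
    (h : γ = ∑ α ∈ R.simples, f α • α) : ∀ α ∈ R.simples, R.coeff γ α = f α := by
  intro α hα
  have hz : ∑ x ∈ R.simples, (R.coeff γ x - f x) • x = 0 := by
    have hs := R.coeff_spec γ hγ
    calc ∑ x ∈ R.simples, (R.coeff γ x - f x) • x
        = ∑ x ∈ R.simples, (R.coeff γ x • x - f x • x) := by
          refine Finset.sum_congr rfl fun x _ => ?_; rw [sub_smul]
      _ = (∑ x ∈ R.simples, R.coeff γ x • x) - ∑ x ∈ R.simples, f x • x := by
          rw [Finset.sum_sub_distrib]
      _ = γ - γ := by rw [← hs, ← h]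
      _ = 0 := sub_self γ
  have hz' : ∑ i : {x // x ∈ R.simples},
      ((R.coeff γ i.1 - f i.1 : ℤ) : ℝ) • (i.1 : V) = 0 := by
    have he := Finset.sum_coe_sort R.simples
      (fun x => ((R.coeff γ x - f x : ℤ) : ℝ) • x)
    rw [he]
    calc ∑ x ∈ R.simples, ((R.coeff γ x - f x : ℤ) : ℝ) • x
        = ∑ x ∈ R.simples, (R.coeff γ x - f x) • x := by
          refine Finset.sum_congr rfl fun x _ => ?_
          exact Int.cast_smul_eq_zsmul ℝ _ x
      _ = 0 := hz
  have hli := Fintype.linearIndependent_iff.mp R.simples_indep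
    (fun i => ((R.coeff γ i.1 - f i.1 : ℤ) : ℝ)) hz' ⟨α, hα⟩
  have : (R.coeff γ α - f α : ℤ) = 0 := by exact_mod_cast hli
  omega

lemma coeff_add' {β γ δ : V} (hβ : β ∈ R.roots) (hγ : γ ∈ R.roots) (hδ : δ ∈ R.roots)
    (h : δ = β + γ) : ∀ α ∈ R.simples, R.coeff δ α = R.coeff β α + R.coeff γ α := by
  refine R.coeff_unique hδ (fun x => R.coeff β x + R.coeff γ x) ?_
  calc δ = β + γ := h
    _ = (∑ x ∈ R.simples, R.coeff β x • x) + ∑ x ∈ R.simples, R.coeff γ x • x := by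
        rw [← R.coeff_spec β hβ, ← R.coeff_spec γ hγ]
    _ = ∑ x ∈ R.simples, (R.coeff β x + R.coeff γ x) • x := by
        rw [← Finset.sum_add_distrib]
        refine Finset.sum_congr rfl fun x _ => ?_; rw [add_smul]

lemma coeff_sub_zsmul {β γ δ : V} (hβ : β ∈ R.roots) (hγ : γ ∈ R.roots) (hδ : δ ∈ R.roots)
    (k : ℤ) (h : δ = β - k • γ) :
    ∀ α ∈ R.simples, R.coeff δ α = R.coeff β α - k * R.coeff γ α := by
  refine R.coeff_unique hδ (fun x => R.coeff β x - k * R.coeff γ x) ?_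
  calc δ = β - k • γ := h
    _ = (∑ x ∈ R.simples, R.coeff β x • x) - k • ∑ x ∈ R.simples, R.coeff γ x • x := by
        rw [← R.coeff_spec β hβ, ← R.coeff_spec γ hγ]
    _ = (∑ x ∈ R.simples, R.coeff β x • x) - ∑ x ∈ R.simples, (k * R.coeff γ x) • x := by
        rw [Finset.smul_sum]
        congr 1
        refine Finset.sum_congr rfl fun x _ => ?_
        rw [mul_smul]
    _ = ∑ x ∈ R.simples, (R.coeff β x - k * R.coeff γ x) • x := by
        rw [← Finset.sum_sub_distrib]
        refine Finset.sum_congr rfl fun x _ => ?_; rw [sub_smul]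

lemma coeff_neg' {β δ : V} (hβ : β ∈ R.roots) (hδ : δ ∈ R.roots) (h : δ = -β) :
    ∀ α ∈ R.simples, R.coeff δ α = -R.coeff β α := by
  refine R.coeff_unique hδ (fun x => -R.coeff β x) ?_
  calc δ = -β := h
    _ = -∑ x ∈ R.simples, R.coeff β x • x := by rw [← R.coeff_spec β hβ]
    _ = ∑ x ∈ R.simples, (-R.coeff β x) • x := by
        rw [← Finset.sum_neg_distrib]
        refine Finset.sum_congr rfl fun x _ => ?_; rw [neg_smul]

lemma coeff_simple_self {α : V} (hα : α ∈ R.simples) : R.coeff α α = 1 := by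
  classical
  have h := R.coeff_unique (R.simples_sub hα) (fun x => if x = α then 1 else 0) ?_ α hα
  · simpa using h
  · rw [eq_comm]
    calc ∑ x ∈ R.simples, (if x = α then (1:ℤ) else 0) • x
        = ∑ x ∈ R.simples, (if x = α then x else 0) := by
          refine Finset.sum_congr rfl fun x _ => ?_
          by_cases h : x = α <;> simp [h]
      _ = α := by rw [Finset.sum_ite_eq' R.simples α (fun x => x), if_pos hα]

lemma coeff_simple_ne {α β : V} (hα : α ∈ R.simples) (hβ : β ∈ R.simples) (hne : β ≠ α) :
    R.coeff α β = 0 := by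
  classical
  have h := R.coeff_unique (R.simples_sub hα) (fun x => if x = α then 1 else 0) ?_ β hβ
  · simpa [hne] using h
  · rw [eq_comm]
    calc ∑ x ∈ R.simples, (if x = α then (1:ℤ) else 0) • x
        = ∑ x ∈ R.simples, (if x = α then x else 0) := by
          refine Finset.sum_congr rfl fun x _ => ?_
          by_cases h : x = α <;> simp [h]
      _ = α := by rw [Finset.sum_ite_eq' R.simples α (fun x => x), if_pos hα]

lemma rle_coeff {μ ν : V} (hμ : μ ∈ R.roots) (hν : ν ∈ R.roots) (h : R.rle μ ν) :
    ∀ α ∈ R.simples, R.coeff μ α ≤ R.coeff ν α := by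
  obtain ⟨c, hc⟩ := h
  have key : ∀ α ∈ R.simples, R.coeff ν α = R.coeff μ α + (c α : ℤ) := by
    refine R.coeff_unique hν (fun x => R.coeff μ x + (c x : ℤ)) ?_
    calc ν = μ + (ν - μ) := by abel
      _ = (∑ x ∈ R.simples, R.coeff μ x • x) + ∑ x ∈ R.simples, (c x : ℤ) • x := by
          rw [← R.coeff_spec μ hμ, ← hc]
      _ = ∑ x ∈ R.simples, (R.coeff μ x + (c x : ℤ)) • x := by
          rw [← Finset.sum_add_distrib]
          refine Finset.sum_congr rfl fun x _ => ?_; rw [add_smul]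
  intro α hα
  have := key α hα
  omega

lemma rle_of_coeff {μ ν : V} (hμ : μ ∈ R.roots) (hν : ν ∈ R.roots)
    (h : ∀ α ∈ R.simples, R.coeff μ α ≤ R.coeff ν α) : R.rle μ ν := by
  refine ⟨fun x => (R.coeff ν x - R.coeff μ x).toNat, ?_⟩
  calc ν - μ = (∑ x ∈ R.simples, R.coeff ν x • x) - ∑ x ∈ R.simples, R.coeff μ x • x := by
        rw [← R.coeff_spec ν hν, ← R.coeff_spec μ hμ]
    _ = ∑ x ∈ R.simples, (R.coeff ν x - R.coeff μ x) • x := by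
        rw [← Finset.sum_sub_distrib]
        refine Finset.sum_congr rfl fun x _ => ?_; rw [sub_smul]
    _ = ∑ x ∈ R.simples, ((((R.coeff ν x - R.coeff μ x).toNat : ℕ) : ℤ)) • x := by
        refine Finset.sum_congr rfl fun x hx => ?_
        rw [Int.toNat_of_nonneg (by have := h x hx; omega)]

lemma neg_root {γ : V} (hγ : γ ∈ R.roots) : -γ ∈ R.roots := by
  have h := R.reflClosed γ hγ γ hγ
  have hne : ⟪γ, γ⟫_ℝ ≠ 0 := ne_of_gt (aux_inner_self_pos (R.nonzero γ hγ))
  have h2 : 2 * ⟪γ, γ⟫_ℝ / ⟪γ, γ⟫_ℝ = 2 := by field_simp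
  rw [h2] at h
  have he : γ - (2:ℝ) • γ = -γ := by
    rw [two_smul]; abel
  rwa [he] at h

/-- If `β, γ` are roots with `(β,γ) > 0`, `β ≠ γ` and `‖β‖ ≤ ‖γ‖`, then `β - γ` is a root. -/
lemma root_sub_aux {β γ : V} (hβ : β ∈ R.roots) (hγ : γ ∈ R.roots)
    (hpos : 0 < ⟪β, γ⟫_ℝ) (hne : β ≠ γ) (hle : ‖β‖ ≤ ‖γ‖) : β - γ ∈ R.roots := by
  obtain ⟨k, hk⟩ := R.crystal γ hγ β hβ
  have hγγ : 0 < ⟪γ, γ⟫_ℝ := aux_inner_self_pos (R.nonzero γ hγ)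
  have hkposR : (0:ℝ) < (k:ℝ) := by rw [← hk]; positivity
  have hkpos : 0 < k := by exact_mod_cast hkposR
  have hCS : ⟪β, γ⟫_ℝ ≤ ‖β‖ * ‖γ‖ := real_inner_le_norm β γ
  have hγnorm : ⟪γ, γ⟫_ℝ = ‖γ‖^2 := real_inner_self_eq_norm_sq γ
  have hβnorm : ⟪β, β⟫_ℝ = ‖β‖^2 := real_inner_self_eq_norm_sq β
  have hkval : (k:ℝ) * ⟪γ, γ⟫_ℝ = 2 * ⟪β, γ⟫_ℝ := by
    field_simp at hk
    linarith [hk]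
  have hk2 : k ≤ 2 := by
    by_contra hgt
    push_neg at hgt
    have h3 : (3:ℝ) ≤ (k:ℝ) := by exact_mod_cast hgt
    nlinarith [norm_nonneg β, norm_nonneg γ]
  have hk1 : 1 ≤ k := hkpos
  interval_cases k
  · -- k = 1
    have h := R.reflClosed γ hγ β hβ
    rw [hk] at h
    simpa using h
  · -- k = 2 : contradiction, β = γ
    exfalso
    apply hne
    have hbg : ⟪β, γ⟫_ℝ = ⟪γ, γ⟫_ℝ := by
      push_cast at hkval; linarith
    have hnormeq : ‖β‖ = ‖γ‖ := by
      nlinarith [norm_nonneg β, norm_nonneg γ]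
    have hsub : ⟪β - γ, β - γ⟫_ℝ = 0 := by
      have hexp := real_inner_sub_sub_self β γ
      rw [hexp, hbg, hβnorm, hγnorm, hnormeq]
      ring
    have h0 : β - γ = 0 := by
      by_contra h0
      exact (ne_of_gt (aux_inner_self_pos h0)) hsub
    exact sub_eq_zero.mp h0

lemma root_sub {β γ : V} (hβ : β ∈ R.roots) (hγ : γ ∈ R.roots)
    (hpos : 0 < ⟪β, γ⟫_ℝ) (hne : β ≠ γ) : β - γ ∈ R.roots := by
  rcases le_total ‖β‖ ‖γ‖ with hle | hle
  · exact R.root_sub_aux hβ hγ hpos hne hle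
  · have h := R.root_sub_aux hγ hβ (by rwa [real_inner_comm]) (Ne.symm hne) hle
    have := R.neg_root h
    rwa [neg_sub] at this

end RootSystemData
end AuxLemmas
/-- Example 4.3: if `ᾱ` is a long simple root with `[θ:ᾱ] = 1`, then
`{γ ∈ Δ⁺ : [γ:ᾱ] = 1} = {γ ∈ Δ⁺ : ᾱ ≼ γ}` is an abelian upper ideal which is maximal
among abelian upper ideals, and `S` of this ideal is `{ᾱ}`. -/
theorem stmt19 {V : Type} [NormedAddCommGroup V] [InnerProductSpace ℝ V] [FiniteDimensional ℝ V]
    (R : RootSystemData V) (θ : V) (hθ : R.IsHighest θ)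
    (abar : V) (habar : abar ∈ R.simples) (hlong : R.IsLong abar)
    (hcoeff : R.coeff θ abar = 1)
    (I : Set V) (hIdef : I = {γ : V | γ ∈ R.posRoots ∧ R.coeff γ abar = 1}) :
    I = {γ : V | γ ∈ R.posRoots ∧ R.rle abar γ}
      ∧ R.IsAbelianIdeal I
      ∧ (∀ J : Set V, R.IsAbelianIdeal J → I ⊆ J → J = I)
      ∧ R.normS I = {abar} := by
  classical
  have hθpos : θ ∈ R.posRoots := hθ.1
  have hθroot : θ ∈ R.roots := hθpos.1
  have habroot : abar ∈ R.roots := R.simples_sub habar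
  have hle_theta : ∀ γ ∈ R.roots, ∀ α ∈ R.simples, R.coeff γ α ≤ R.coeff θ α :=
    fun γ hγ => R.rle_coeff hγ hθroot (hθ.2 γ hγ)
  have hle1 : ∀ γ ∈ R.roots, R.coeff γ abar ≤ 1 := by
    intro γ hγ
    have := hle_theta γ hγ abar habar
    omega
  have habar_coeff : R.coeff abar abar = 1 := R.coeff_simple_self habar
  have habar_pos : abar ∈ R.posRoots := by
    refine ⟨habroot, fun α hα => ?_⟩
    by_cases h : α = abar
    · rw [h, habar_coeff]; norm_num
    · rw [R.coeff_simple_ne habar hα h]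
  have habar_I : abar ∈ I := by rw [hIdef]; exact ⟨habar_pos, habar_coeff⟩
  -- Part 1
  have part1 : I = {γ : V | γ ∈ R.posRoots ∧ R.rle abar γ} := by
    rw [hIdef]; ext γ; simp only [Set.mem_setOf_eq]
    constructor
    · rintro ⟨hγpos, hc1⟩
      refine ⟨hγpos, R.rle_of_coeff habroot hγpos.1 fun α hα => ?_⟩
      by_cases h : α = abar
      · rw [h, habar_coeff, hc1]
      · rw [R.coeff_simple_ne habar hα h]; exact hγpos.2 α hα
    · rintro ⟨hγpos, hrle⟩
      refine ⟨hγpos, ?_⟩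
      have h1 := R.rle_coeff habroot hγpos.1 hrle abar habar
      have h2 := hle1 γ hγpos.1
      omega
  -- Part 2
  have hupper : R.IsUpperIdeal I := by
    constructor
    · rw [hIdef]; exact fun γ hγ => hγ.1
    · intro ν hν γ hγpos hrle
      rw [hIdef] at hν ⊢
      obtain ⟨hνpos, hν1⟩ := hν
      have h1 := R.rle_coeff hνpos.1 hγpos.1 hrle abar habar
      have h2 := hle1 γ hγpos.1
      exact ⟨hγpos, by omega⟩
  have habelian : R.IsAbelianIdeal I := by
    refine ⟨hupper, fun γ₁ hγ₁ γ₂ hγ₂ hsum => ?_⟩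
    rw [hIdef] at hγ₁ hγ₂
    have hadd := R.coeff_add' hγ₁.1.1 hγ₂.1.1 hsum rfl abar habar
    have h1 := hle1 _ hsum
    have h2 := hγ₁.2
    have h3 := hγ₂.2
    omega
  have pos_of : ∀ γ ∈ R.roots, 0 < R.coeff γ abar → γ ∈ R.posRoots := by
    intro γ hγ hpos
    rcases R.coeff_sign γ hγ with h | h
    · exact ⟨hγ, h⟩
    · have := h abar habar; omega
  -- (γ, θ) ≥ 0 for positive roots
  have inner_theta_nonneg : ∀ γ ∈ R.posRoots, 0 ≤ ⟪γ, θ⟫_ℝ := by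
    intro γ hγpos
    by_contra hneg
    push_neg at hneg
    have hnegθ : -θ ∈ R.roots := R.neg_root hθroot
    have hne : γ ≠ -θ := by
      intro h
      have h1 := R.coeff_neg' hθroot hγpos.1 h abar habar
      have h2 := hγpos.2 abar habar
      omega
    have hinner : 0 < ⟪γ, -θ⟫_ℝ := by rw [inner_neg_right]; linarith
    have hroot : γ + θ ∈ R.roots := by
      have h := R.root_sub hγpos.1 hnegθ hinner hne
      rwa [sub_neg_eq_add] at h
    have hc := R.rle_coeff hroot hθroot (hθ.2 _ hroot)
    have hadd := R.coeff_add' hγpos.1 hθroot hroot rfl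
    have hzero : ∀ α ∈ R.simples, R.coeff γ α = 0 := by
      intro α hα
      have h1 := hc α hα
      have h2 := hadd α hα
      have h3 := hγpos.2 α hα
      omega
    have h0 : γ = 0 := by
      rw [R.coeff_spec γ hγpos.1]
      refine Finset.sum_eq_zero fun x hx => ?_
      rw [hzero x hx, zero_smul]
    exact R.nonzero γ hγpos.1 h0
  -- Part 3: maximality
  have part3 : ∀ J : Set V, R.IsAbelianIdeal J → I ⊆ J → J = I := by
    intro J hJ hIJ
    by_contra hnJ
    have hdiff : (J \ I).Nonempty :=
      Set.diff_nonempty.mpr fun h => hnJ (Set.Subset.antisymm h hIJ)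
    have hfin : (J \ I).Finite := R.finite.subset fun x hx => (hJ.1.1 hx.1).1
    obtain ⟨γ, hγmem, hγmax⟩ :=
      Set.Finite.exists_maximalFor (fun x => ∑ α ∈ R.simples, R.coeff x α) (J \ I) hfin hdiff
    obtain ⟨hγJ, hγI⟩ := hγmem
    have hγpos : γ ∈ R.posRoots := hJ.1.1 hγJ
    have hγroot : γ ∈ R.roots := hγpos.1
    have hγ0 : R.coeff γ abar = 0 := by
      have h1 := hle1 γ hγroot
      have h2 := hγpos.2 abar habar
      have h3 : R.coeff γ abar ≠ 1 := fun h => hγI (by rw [hIdef]; exact ⟨hγpos, h⟩)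
      omega
    have hγγpos : 0 < ⟪γ, γ⟫_ℝ := aux_inner_self_pos (R.nonzero γ hγroot)
    have hγγne : ⟪γ, γ⟫_ℝ ≠ 0 := ne_of_gt hγγpos
    rcases lt_trichotomy ⟪γ, abar⟫_ℝ 0 with hlt | heq | hgt
    · -- (γ, abar) < 0 : γ + abar is a root, both in J
      have hne2 : γ ≠ -abar := by
        intro h
        have h1 := R.coeff_neg' habroot hγroot h abar habar
        omega
      have hroot2 : γ + abar ∈ R.roots := by
        have hinner : 0 < ⟪γ, -abar⟫_ℝ := by rw [inner_neg_right]; linarith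
        have h := R.root_sub hγroot (R.neg_root habroot) hinner hne2
        rwa [sub_neg_eq_add] at h
      exact hJ.2 γ hγJ abar (hIJ habar_I) hroot2
    · -- (γ, abar) = 0
      rcases (inner_theta_nonneg γ hγpos).lt_or_eq with hθgt | hθzero
      · -- (γ, θ) > 0 : θ - γ ∈ I, and γ + (θ - γ) = θ is a root
        have hneθ : γ ≠ θ := by
          intro h
          rw [h, hcoeff] at hγ0
          omega
        have hroot2 : θ - γ ∈ R.roots :=
          R.root_sub hθroot hγroot (by rwa [real_inner_comm]) (Ne.symm hneθ)
        have hadd := R.coeff_add' hγroot hroot2 hθroot (by abel) abar habar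
        have h1 : R.coeff (θ - γ) abar = 1 := by omega
        have hpos2 : θ - γ ∈ R.posRoots := pos_of _ hroot2 (by omega)
        have hI2 : θ - γ ∈ I := by rw [hIdef]; exact ⟨hpos2, h1⟩
        refine hJ.2 γ hγJ (θ - γ) (hIJ hI2) ?_
        have he : γ + (θ - γ) = θ := by abel
        rw [he]; exact hθroot
      · -- (γ, θ) = 0 : go up by a simple root
        obtain ⟨c, hc⟩ := hθ.2 γ hγroot
        have hinnersum : ⟪θ - γ, γ⟫_ℝ < 0 := by
          rw [inner_sub_left]
          have h0 : ⟪θ, γ⟫_ℝ = 0 := by rw [real_inner_comm]; exact hθzero.symm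
          rw [h0]; linarith
        have hex : ∃ α ∈ R.simples, ⟪α, γ⟫_ℝ < 0 := by
          by_contra hall
          push_neg at hall
          have hnn : (0:ℝ) ≤ ⟪θ - γ, γ⟫_ℝ := by
            have hc' : θ - γ = ∑ x ∈ R.simples, ((c x : ℤ) : ℝ) • x := by
              rw [hc]
              exact Finset.sum_congr rfl fun x _ => (Int.cast_smul_eq_zsmul ℝ _ x).symm
            rw [hc', sum_inner]
            refine Finset.sum_nonneg fun x hx => ?_
            rw [real_inner_smul_left]
            have h1 := hall x hx
            have h2 : (0:ℝ) ≤ ((c x : ℤ) : ℝ) := by positivity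
            exact mul_nonneg h2 h1
          linarith
        obtain ⟨α, hα, hαγ⟩ := hex
        have hαroot : α ∈ R.roots := R.simples_sub hα
        have hneα : γ ≠ -α := by
          intro h
          have h1 := R.coeff_neg' hαroot hγroot h α hα
          have h2 := R.coeff_simple_self hα
          have h3 := hγpos.2 α hα
          omega
        have hroot2 : γ + α ∈ R.roots := by
          have hinner : 0 < ⟪γ, -α⟫_ℝ := by
            rw [inner_neg_right, real_inner_comm]; linarith
          have h := R.root_sub hγroot (R.neg_root hαroot) hinner hneα
          rwa [sub_neg_eq_add] at h
        have haddc := R.coeff_add' hγroot hαroot hroot2 rfl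
        have hαnn : ∀ x ∈ R.simples, 0 ≤ R.coeff α x := by
          intro x hx
          by_cases hxa : x = α
          · rw [hxa, R.coeff_simple_self hα]; norm_num
          · rw [R.coeff_simple_ne hα hx hxa]
        have hpos2 : γ + α ∈ R.posRoots := by
          refine ⟨hroot2, fun x hx => ?_⟩
          have h1 := haddc x hx
          have h2 := hγpos.2 x hx
          have h3 := hαnn x hx
          omega
        have hrle2 : R.rle γ (γ + α) := by
          refine R.rle_of_coeff hγroot hroot2 fun x hx => ?_
          have h1 := haddc x hx
          have h3 := hαnn x hx
          omega
        have hJ2 : γ + α ∈ J := hJ.1.2 γ hγJ (γ + α) hpos2 hrle2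
        have hsumα : ∑ x ∈ R.simples, R.coeff α x = 1 := by
          have hind : ∀ x ∈ R.simples, R.coeff α x = if x = α then 1 else 0 := by
            intro x hx
            by_cases hxa : x = α
            · rw [if_pos hxa, hxa, R.coeff_simple_self hα]
            · rw [if_neg hxa, R.coeff_simple_ne hα hx hxa]
          rw [Finset.sum_congr rfl hind, Finset.sum_ite_eq' R.simples α (fun _ => (1:ℤ)),
            if_pos hα]
        have hht : ∑ x ∈ R.simples, R.coeff (γ + α) x
            = (∑ x ∈ R.simples, R.coeff γ x) + 1 := by
          rw [← hsumα, ← Finset.sum_add_distrib]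
          exact Finset.sum_congr rfl fun x hx => haddc x hx
        have hinI : γ + α ∈ I := by
          by_contra hni
          have hmax := hγmax (j := γ + α) ⟨hJ2, hni⟩ (by dsimp only; omega)
          dsimp only at hmax; omega
        have h1 : R.coeff (γ + α) abar = 1 := by
          rw [hIdef] at hinI; exact hinI.2
        have hα1 : R.coeff α abar = 1 := by
          have := haddc abar habar; omega
        have hαa : α = abar := by
          by_contra hxa
          have := R.coeff_simple_ne hα habar (Ne.symm hxa)
          omega
        rw [hαa, real_inner_comm] at hαγ
        linarith
    · -- (γ, abar) > 0 : reflect abar in γ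
      obtain ⟨k, hk⟩ := R.crystal γ hγroot abar habroot
      have hδroot : abar - k • γ ∈ R.roots := by
        have h := R.reflClosed γ hγroot abar habroot
        rwa [hk, Int.cast_smul_eq_zsmul] at h
      have hδc := R.coeff_sub_zsmul habroot hγroot hδroot k rfl abar habar
      have hδ1 : R.coeff (abar - k • γ) abar = 1 := by
        rw [hδc, habar_coeff, hγ0]; ring
      have hδpos : abar - k • γ ∈ R.posRoots := pos_of _ hδroot (by omega)
      have hδI : abar - k • γ ∈ I := by rw [hIdef]; exact ⟨hδpos, hδ1⟩
      rw [div_eq_iff hγγne] at hk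
      have hgt' : 0 < ⟪abar, γ⟫_ℝ := by rwa [real_inner_comm]
      have hinnerδ : ⟪γ, abar - k • γ⟫_ℝ < 0 := by
        have hs : ⟪γ, abar - k • γ⟫_ℝ = ⟪γ, abar⟫_ℝ - (k:ℝ) * ⟪γ, γ⟫_ℝ := by
          rw [inner_sub_right, ← Int.cast_smul_eq_zsmul ℝ k γ, real_inner_smul_right]
        rw [hs]
        linarith [hk, hgt, real_inner_comm abar γ]
      have hneδ : γ ≠ -(abar - k • γ) := by
        intro h
        have h1 := R.coeff_neg' hδroot hγroot h abar habar
        omega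
      have hroot2 : γ + (abar - k • γ) ∈ R.roots := by
        have hinner : 0 < ⟪γ, -(abar - k • γ)⟫_ℝ := by rw [inner_neg_right]; linarith
        have h := R.root_sub hγroot (R.neg_root hδroot) hinner hneδ
        rwa [sub_neg_eq_add] at h
      exact hJ.2 γ hγJ (abar - k • γ) (hIJ hδI) hroot2
  -- Part 4
  have hminset : R.minSet I = {abar} := by
    ext γ
    simp only [RootSystemData.minSet, Set.mem_setOf_eq, Set.mem_singleton_iff]
    constructor
    · rintro ⟨hγI, hmin⟩
      have hrle : R.rle abar γ := by
        rw [part1] at hγI; exact hγI.2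
      exact (hmin abar habar_I hrle).symm
    · intro hγab
      rw [hγab]
      refine ⟨habar_I, fun ν hνI hrle => ?_⟩
      rw [hIdef] at hνI
      obtain ⟨hνpos, hν1⟩ := hνI
      have hcc := R.rle_coeff hνpos.1 habroot hrle
      have hco : ∀ x ∈ R.simples, R.coeff ν x = R.coeff abar x := by
        intro x hx
        by_cases hxa : x = abar
        · rw [hxa, hν1, habar_coeff]
        · have h1 := hcc x hx
          have h2 := hνpos.2 x hx
          have h3 := R.coeff_simple_ne habar hx hxa
          omega
      calc ν = ∑ x ∈ R.simples, R.coeff ν x • x := R.coeff_spec ν hνpos.1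
        _ = ∑ x ∈ R.simples, R.coeff abar x • x :=
            Finset.sum_congr rfl fun x hx => by rw [hco x hx]
        _ = abar := (R.coeff_spec abar habroot).symm
  have part4 : R.normS I = {abar} := by
    ext α
    simp only [RootSystemData.normS, Set.mem_setOf_eq, Set.mem_singleton_iff]
    constructor
    · rintro ⟨hα, γ, hγmin, hor⟩
      rw [hminset] at hγmin
      have hγab : γ = abar := hγmin
      rw [hγab] at hor
      rcases hor with hsub | heqa
      · by_contra hne
        have hsplit : abar = (abar - α) + α := by abel
        have hadd := R.coeff_add' hsub.1 (R.simples_sub hα) habroot hsplit α hα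
        have h2 := R.coeff_simple_ne habar hα hne
        have h3 := R.coeff_simple_self hα
        have h4 := hsub.2 α hα
        omega
      · exact heqa.symm
    · intro hab
      rw [hab]
      exact ⟨habar, abar, by rw [hminset]; exact rfl, Or.inr rfl⟩
  exact ⟨part1, habelian, part3, part4⟩
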